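/- Let a>0, α∈ℝ, β>0, m∈ℤ and λ∈ℂ. Suppose ψ:[-a,a]→ℂ is twice continuously differentiable, not identically zero, satisfies −ψ″(x)+m²ψ(x)=λψ(x) for all x∈[-a,a], ψ′(a)+(iα+β)ψ(a)=0 and ψ′(−a)+(iα−β)ψ(−a)=0. Then λ is a real number. -/

import Mathlib

open Complex

noncomputable def trigc (k b p q : ℂ) : ℝ → ℂ :=
  fun t => p * Complex.cos (k*((t:ℂ)-b)) + q * Complex.sin (k*((t:ℂ)-b))

lemma hasDerivAt_trigc (k b p q : ℂ) (x : ℝ) :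
    HasDerivAt (trigc k b p q) (trigc k b (q*k) (-(p*k)) x) x := by
  have hlin : ∀ w : ℂ, HasDerivAt (fun w : ℂ => k*(w-b)) k w := by
    intro w
    simpa using (((hasDerivAt_id w).sub_const b).const_mul k)
  have hc : HasDerivAt (fun w : ℂ => p * Complex.cos (k*(w-b)) + q * Complex.sin (k*(w-b)))
      (p * (-Complex.sin (k*((x:ℂ)-b)) * k) + q * (Complex.cos (k*((x:ℂ)-b)) * k)) (x:ℂ) := by
    exact (((Complex.hasDerivAt_cos _).comp _ (hlin _)).const_mul p).add
      (((Complex.hasDerivAt_sin _).comp _ (hlin _)).const_mul q)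
  have := hc.comp_ofReal
  convert this using 1
  case e'_8 => rfl
  simp [trigc]; ring

lemma wronskian_const {f f' g g' : ℝ → ℂ} {s : Set ℝ} (hs : Convex ℝ s) (μ : ℂ)
    (hf : ∀ x ∈ s, HasDerivAt f (f' x) x) (hg : ∀ x ∈ s, HasDerivAt g (g' x) x)
    (hf2 : ∀ x ∈ s, HasDerivAt f' (μ * f x) x) (hg2 : ∀ x ∈ s, HasDerivAt g' (μ * g x) x)
    {x y : ℝ} (hx : x ∈ s) (hy : y ∈ s) :
    f' x * g x - f x * g' x = f' y * g y - f y * g' y := by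
  set W : ℝ → ℂ := fun t => f' t * g t - f t * g' t with hW
  have hder : ∀ t ∈ s, HasDerivAt W 0 t := by
    intro t ht
    have h := ((hf2 t ht).mul (hg t ht)).sub ((hf t ht).mul (hg2 t ht))
    convert h using 1
    case e'_4 => rfl
    case e'_8 => rfl
    ring
  have hb := hs.norm_image_sub_le_of_norm_hasDerivWithin_le (C := 0)
    (fun t ht => (hder t ht).hasDerivWithinAt) (fun t ht => by simp) hy hx
  rw [zero_mul] at hb
  exact sub_eq_zero.1 (norm_le_zero_iff.1 hb)

lemma im_cos_mul_conj_sin (z : ℂ) :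
    (Complex.cos z * (starRingEnd ℂ) (Complex.sin z)).im = - Real.sinh (2*z.im) / 2 := by
  have h : Complex.cos z * Complex.sin ((starRingEnd ℂ) z)
      = (Complex.sin ((starRingEnd ℂ) z + z) + Complex.sin ((starRingEnd ℂ) z - z))/2 := by
    rw [Complex.sin_add, Complex.sin_sub]; ring
  rw [← Complex.sin_conj, h]
  have h1 : (starRingEnd ℂ) z + z = ((2*z.re : ℝ) : ℂ) := by rw [add_comm]; exact Complex.add_conj z
  have h2 : (starRingEnd ℂ) z - z = -(((2*z.im:ℝ):ℂ) * Complex.I) := by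
    rw [← Complex.sub_conj]; ring
  rw [h1, h2, Complex.sin_neg, Complex.sin_mul_I, ← Complex.ofReal_sin, ← Complex.ofReal_sinh]
  simp only [Complex.div_im, Complex.add_im, Complex.neg_im, Complex.mul_im,
    Complex.ofReal_re, Complex.ofReal_im, Complex.I_re, Complex.I_im,
    Complex.div_re, Complex.add_re, Complex.neg_re, Complex.mul_re,
    Complex.re_ofNat, Complex.im_ofNat, Complex.normSq_ofNat]
  ring

/-- for `β > 0` the spectrum of the zero-curvature Hamiltonian
`H_{I(0)}^m(α, β)` with separated PT-symmetric boundary conditions is real. -/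
theorem pt_zero_curvature_beta_pos_real
    (a α β : ℝ) (ha : 0 < a) (hβ : 0 < β) (m : ℤ) (lam : ℂ)
    (ψ ψ' ψ'' : ℝ → ℂ)
    (hd1 : ∀ x ∈ Set.Icc (-a) a, HasDerivAt ψ (ψ' x) x)
    (hd2 : ∀ x ∈ Set.Icc (-a) a, HasDerivAt ψ' (ψ'' x) x)
    (hcont : ContinuousOn ψ'' (Set.Icc (-a) a))
    (hne : ∃ x ∈ Set.Icc (-a) a, ψ x ≠ 0)
    (hode : ∀ x ∈ Set.Icc (-a) a, -ψ'' x + (m : ℂ) ^ 2 * ψ x = lam * ψ x)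
    (hbc1 : ψ' a + (Complex.I * (α : ℂ) + (β : ℂ)) * ψ a = 0)
    (hbc2 : ψ' (-a) + (Complex.I * (α : ℂ) - (β : ℂ)) * ψ (-a) = 0) :
    ∃ r : ℝ, lam = (r : ℂ) := by
  obtain ⟨k, hk⟩ := IsAlgClosed.exists_pow_nat_eq (lam - (m:ℂ)^2) (n := 2) (by norm_num)
  by_cases hq : k.im = 0
  · refine ⟨(m:ℝ)^2 + k.re^2, ?_⟩
    have hk' : lam = (m:ℂ)^2 + k^2 := by linear_combination -hk
    have hkre : k = ((k.re:ℝ):ℂ) := Complex.ext (by simp) (by simp [hq])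
    rw [hk', hkre]
    push_cast
    simp
  · exfalso
    obtain ⟨x0, hx0, hψx0⟩ := hne
    have hIcc : Convex ℝ (Set.Icc (-a) a) := convex_Icc _ _
    have haI : a ∈ Set.Icc (-a) a := by constructor <;> linarith
    have hnaI : (-a) ∈ Set.Icc (-a) a := by constructor <;> linarith
    have hk0 : k ≠ 0 := fun h => hq (by simp [h])
    set μ : ℂ := (m:ℂ)^2 - lam with hμ
    have hμk : μ = -(k^2) := by rw [hμ]; linear_combination hk
    have hψ2 : ∀ x ∈ Set.Icc (-a) a, HasDerivAt ψ' (μ * ψ x) x := by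
      intro x hx
      have h := hd2 x hx
      have he : ψ'' x = μ * ψ x := by rw [hμ]; linear_combination - hode x hx
      rwa [he] at h
    -- the comparison solutions
    have hφa1 : ∀ x : ℝ, HasDerivAt (trigc k (a:ℝ) k (-(Complex.I * (α:ℂ) + (β:ℂ))))
        (trigc k (a:ℝ) ((-(Complex.I * (α:ℂ) + (β:ℂ)))*k) (-(k*k)) x) x := by
      intro x
      exact hasDerivAt_trigc k _ _ _ x
    have hφa2 : ∀ x : ℝ, HasDerivAt (trigc k (a:ℝ) ((-(Complex.I * (α:ℂ) + (β:ℂ)))*k) (-(k*k)))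
        (μ * trigc k (a:ℝ) k (-(Complex.I * (α:ℂ) + (β:ℂ))) x) x := by
      intro x
      have h := hasDerivAt_trigc k (a:ℝ) ((-(Complex.I * (α:ℂ) + (β:ℂ)))*k) (-(k*k)) x
      convert h using 1
      simp only [trigc]
      rw [hμk]; ring
    have hφb1 : ∀ x : ℝ, HasDerivAt (trigc k ((-a:ℝ):ℂ) k (-(Complex.I * (α:ℂ) - (β:ℂ))))
        (trigc k ((-a:ℝ):ℂ) ((-(Complex.I * (α:ℂ) - (β:ℂ)))*k) (-(k*k)) x) x := by
      intro x
      exact hasDerivAt_trigc k _ _ _ x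
    have hφb2 : ∀ x : ℝ, HasDerivAt (trigc k ((-a:ℝ):ℂ) ((-(Complex.I * (α:ℂ) - (β:ℂ)))*k) (-(k*k)))
        (μ * trigc k ((-a:ℝ):ℂ) k (-(Complex.I * (α:ℂ) - (β:ℂ))) x) x := by
      intro x
      have h := hasDerivAt_trigc k ((-a:ℝ):ℂ) ((-(Complex.I * (α:ℂ) - (β:ℂ)))*k) (-(k*k)) x
      convert h using 1
      simp only [trigc]
      rw [hμk]; ring
    -- evaluations at the endpoints
    have e1 : trigc k (a:ℝ) k (-(Complex.I * (α:ℂ) + (β:ℂ))) a = k := by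
      simp [trigc]
    have e2 : trigc k (a:ℝ) ((-(Complex.I * (α:ℂ) + (β:ℂ)))*k) (-(k*k)) a
        = (-(Complex.I * (α:ℂ) + (β:ℂ)))*k := by
      simp [trigc]
    have e3 : trigc k ((-a:ℝ):ℂ) k (-(Complex.I * (α:ℂ) - (β:ℂ))) (-a) = k := by
      simp [trigc]
    have e4 : trigc k ((-a:ℝ):ℂ) ((-(Complex.I * (α:ℂ) - (β:ℂ)))*k) (-(k*k)) (-a)
        = (-(Complex.I * (α:ℂ) - (β:ℂ)))*k := by
      simp [trigc]
    set z : ℂ := k * (((2*a:ℝ)):ℂ) with hzdef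
    have hz : (a:ℂ) - (((-a:ℝ)):ℂ) = ((2*a:ℝ):ℂ) := by push_cast; ring
    have e5 : trigc k ((-a:ℝ):ℂ) k (-(Complex.I * (α:ℂ) - (β:ℂ))) a
        = k * Complex.cos z + (-(Complex.I * (α:ℂ) - (β:ℂ))) * Complex.sin z := by
      simp only [trigc]
      rw [hz]
    have e6 : trigc k ((-a:ℝ):ℂ) ((-(Complex.I * (α:ℂ) - (β:ℂ)))*k) (-(k*k)) a
        = ((-(Complex.I * (α:ℂ) - (β:ℂ)))*k) * Complex.cos z + (-(k*k)) * Complex.sin z := by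
      simp only [trigc]
      rw [hz]
    -- Wronskian identities
    have hW1 := wronskian_const hIcc μ hd1 (fun x _ => hφa1 x) hψ2 (fun x _ => hφa2 x) hx0 haI
    rw [e1, e2] at hW1
    have h1 : ψ' x0 * trigc k (a:ℝ) k (-(Complex.I * (α:ℂ) + (β:ℂ))) x0
        - ψ x0 * trigc k (a:ℝ) ((-(Complex.I * (α:ℂ) + (β:ℂ)))*k) (-(k*k)) x0 = 0 := by
      rw [hW1]; linear_combination k * hbc1
    have hW2 := wronskian_const hIcc μ hd1 (fun x _ => hφb1 x) hψ2 (fun x _ => hφb2 x) hx0 hnaI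
    rw [e3, e4] at hW2
    have h2 : ψ' x0 * trigc k ((-a:ℝ):ℂ) k (-(Complex.I * (α:ℂ) - (β:ℂ))) x0
        - ψ x0 * trigc k ((-a:ℝ):ℂ) ((-(Complex.I * (α:ℂ) - (β:ℂ)))*k) (-(k*k)) x0 = 0 := by
      rw [hW2]; linear_combination k * hbc2
    have hWab := wronskian_const hIcc μ (fun x _ => hφa1 x) (fun x _ => hφb1 x)
      (fun x _ => hφa2 x) (fun x _ => hφb2 x) hx0 haI
    have hWabx0 : trigc k (a:ℝ) ((-(Complex.I * (α:ℂ) + (β:ℂ)))*k) (-(k*k)) x0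
        * trigc k ((-a:ℝ):ℂ) k (-(Complex.I * (α:ℂ) - (β:ℂ))) x0
        - trigc k (a:ℝ) k (-(Complex.I * (α:ℂ) + (β:ℂ))) x0
        * trigc k ((-a:ℝ):ℂ) ((-(Complex.I * (α:ℂ) - (β:ℂ)))*k) (-(k*k)) x0 = 0 := by
      have hcancel : ψ x0 * (trigc k (a:ℝ) ((-(Complex.I * (α:ℂ) + (β:ℂ)))*k) (-(k*k)) x0
          * trigc k ((-a:ℝ):ℂ) k (-(Complex.I * (α:ℂ) - (β:ℂ))) x0
          - trigc k (a:ℝ) k (-(Complex.I * (α:ℂ) + (β:ℂ))) x0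
          * trigc k ((-a:ℝ):ℂ) ((-(Complex.I * (α:ℂ) - (β:ℂ)))*k) (-(k*k)) x0) = 0 := by
        linear_combination (- trigc k ((-a:ℝ):ℂ) k (-(Complex.I * (α:ℂ) - (β:ℂ))) x0) * h1
          + (trigc k (a:ℝ) k (-(Complex.I * (α:ℂ) + (β:ℂ))) x0) * h2
      exact (mul_eq_zero.1 hcancel).resolve_left hψx0
    rw [hWabx0] at hWab
    rw [e1, e2, e5, e6] at hWab
    -- secular equation
    set gsq : ℝ := α^2 + β^2 with hgsqdef
    have hgsq : (gsq:ℂ) = (α:ℂ)^2 + (β:ℂ)^2 := by rw [hgsqdef]; push_cast; ring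
    have hE0 : k * ((k^2 - (gsq:ℂ)) * Complex.sin z - 2*(β:ℂ)*k*Complex.cos z) = 0 := by
      linear_combination (-hWab) + (-(k*Complex.sin z))*hgsq
        + (-((α:ℂ)^2*k*Complex.sin z))*Complex.I_sq
    have hE : (k^2 - (gsq:ℂ)) * Complex.sin z = 2*(β:ℂ)*k*Complex.cos z := by
      have h := (mul_eq_zero.1 hE0).resolve_left hk0
      linear_combination h
    -- sin z ≠ 0
    have hβC : ((β:ℝ):ℂ) ≠ 0 := by exact_mod_cast ne_of_gt hβ
    have hS : Complex.sin z ≠ 0 := by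
      intro h
      have hC : Complex.cos z = 0 := by
        rw [h, mul_zero] at hE
        have h2 : (2:ℂ)*(β:ℂ)*k ≠ 0 := by
          apply mul_ne_zero (mul_ne_zero two_ne_zero hβC) hk0
        exact (mul_eq_zero.1 hE.symm).resolve_left h2
      have hsc := Complex.sin_sq_add_cos_sq z
      rw [h, hC] at hsc
      simp at hsc
    -- multiply by conj k * conj (sin z) and take imaginary parts
    have key : ((k^2 - (gsq:ℂ)) * (starRingEnd ℂ) k) * (Complex.sin z * (starRingEnd ℂ) (Complex.sin z))
        = (2*(β:ℂ) * (k * (starRingEnd ℂ) k)) * (Complex.cos z * (starRingEnd ℂ) (Complex.sin z)) := by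
      linear_combination ((starRingEnd ℂ) k * (starRingEnd ℂ) (Complex.sin z)) * hE
    rw [Complex.mul_conj, Complex.mul_conj] at key
    have hw : ((k^2 - (gsq:ℂ)) * (starRingEnd ℂ) k).im
        = k.im * (Complex.normSq k + gsq) := by
      simp only [pow_two, Complex.mul_im, Complex.mul_re, Complex.sub_im, Complex.sub_re,
        Complex.conj_re, Complex.conj_im, Complex.ofReal_re, Complex.ofReal_im,
        Complex.normSq_apply]
      ring
    have hcs := im_cos_mul_conj_sin z
    have hzim : z.im = k.im * (2*a) := by
      rw [hzdef]
      simp [Complex.mul_im]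
    rw [hzim] at hcs
    have hLHS : (((k^2 - (gsq:ℂ)) * (starRingEnd ℂ) k) * ((Complex.normSq (Complex.sin z) : ℝ):ℂ)).im
        = (k.im * (Complex.normSq k + gsq)) * Complex.normSq (Complex.sin z) := by
      rw [Complex.mul_im, hw]
      simp
    have hRHS : ((2*(β:ℝ) * Complex.normSq k : ℝ) : ℂ).im = 0 := by simp
    have hre : ((2*(β:ℝ) * Complex.normSq k : ℝ) : ℂ).re = 2*β*Complex.normSq k := by simp
    have hfact : (2:ℂ)*(β:ℂ) * ((Complex.normSq k : ℝ):ℂ) = ((2*(β:ℝ) * Complex.normSq k : ℝ) : ℂ) := by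
      push_cast; ring
    rw [hfact] at key
    have him := congrArg Complex.im key
    rw [hLHS, Complex.mul_im, hre, hRHS, hcs, zero_mul, add_zero] at him
    -- him : k.im * (normSq k + gsq) * normSq (sin z) = 2*β*normSq k * (-sinh(...)/2)  (roughly)
    have hnS : 0 < Complex.normSq (Complex.sin z) := Complex.normSq_pos.2 hS
    have hnK : 0 < Complex.normSq k := Complex.normSq_pos.2 hk0
    have hgsq0 : (0:ℝ) < gsq := by rw [hgsqdef]; positivity
    rcases lt_trichotomy k.im 0 with hlt | heq | hgt
    · have hsinh : Real.sinh (2*(k.im*(2*a))) < 0 := by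
        rw [← Real.sinh_zero]
        exact Real.sinh_lt_sinh.2 (by nlinarith)
      have hA : k.im * (Complex.normSq k + gsq) * Complex.normSq (Complex.sin z) < 0 :=
        mul_neg_of_neg_of_pos (mul_neg_of_neg_of_pos hlt (by linarith)) hnS
      have hB : 0 < 2*β*Complex.normSq k * (-Real.sinh (2*(k.im*(2*a)))/2) :=
        mul_pos (by positivity) (by linarith)
      rw [him] at hA
      linarith
    · exact hq heq
    · have hsinh : 0 < Real.sinh (2*(k.im*(2*a))) := by
        rw [← Real.sinh_zero]
        exact Real.sinh_lt_sinh.2 (by nlinarith)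
      have hA : 0 < k.im * (Complex.normSq k + gsq) * Complex.normSq (Complex.sin z) :=
        mul_pos (mul_pos hgt (by linarith)) hnS
      have hB : 2*β*Complex.normSq k * (-Real.sinh (2*(k.im*(2*a)))/2) < 0 :=
        mul_neg_of_pos_of_neg (by positivity) (by linarith)
      rw [him] at hA
      linarith
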